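/- Let η be a continuous function of τ, let C ∈ ℝ and C₀ ∈ ℝ. On the region where 2τ + C > 0, the function f(τ, z) = C₀ exp( −z²/(4τ + 2C) + ∫_{τ₀}^{τ} (η(s) − 1)/(2s + C) ds ) is a solution of f_τ + η(τ) z^{-1} f_z − f_zz = 0 for z ≠ 0. -/

import Mathlib

theorem gaussian_type_solution (η : ℝ → ℝ) (hη : Continuous η) (C C₀ τ₀ : ℝ)
    (hτ₀ : 2 * τ₀ + C > 0) (f : ℝ → ℝ → ℝ)
    (hf : ∀ τ z, f τ z = C₀ * Real.exp (-(z ^ 2) / (4 * τ + 2 * C)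
      + ∫ s in τ₀..τ, (η s - 1) / (2 * s + C))) :
    ∀ τ : ℝ, 2 * τ + C > 0 → ∀ z : ℝ, z ≠ 0 →
      deriv (fun s => f s z) τ + η τ * z⁻¹ * deriv (f τ) z
        - deriv (deriv (f τ)) z = 0 := by
  intro τ hτ z hz
  have ha : (4 * τ + 2 * C) ≠ 0 := by nlinarith
  have hb : (2 * τ + C) ≠ 0 := by nlinarith
  set h : ℝ → ℝ := fun s => (η s - 1) / (2 * s + C) with hh
  have hopen : IsOpen {s : ℝ | 0 < 2 * s + C} :=
    isOpen_lt continuous_const (by continuity)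
  have hcontOn : ContinuousOn h {s : ℝ | 0 < 2 * s + C} := by
    apply ContinuousOn.div
    · exact (hη.sub continuous_const).continuousOn
    · exact (by continuity : Continuous fun s : ℝ => 2 * s + C).continuousOn
    · intro x hx; exact ne_of_gt hx
  have hsub : Set.uIcc τ₀ τ ⊆ {s : ℝ | 0 < 2 * s + C} := by
    intro s hs
    simp only [Set.mem_setOf_eq]
    rcases le_total τ₀ τ with h1 | h1
    · rw [Set.uIcc_of_le h1] at hs; nlinarith [hs.1]
    · rw [Set.uIcc_of_ge h1] at hs; nlinarith [hs.1]
  have hInt : IntervalIntegrable h MeasureTheory.volume τ₀ τ :=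
    (hcontOn.mono hsub).intervalIntegrable
  have hmeas : StronglyMeasurableAtFilter h (nhds τ) :=
    hcontOn.stronglyMeasurableAtFilter hopen τ hτ
  have hI : HasDerivAt (fun t => ∫ s in τ₀..t, h s) (h τ) τ :=
    intervalIntegral.integral_hasDerivAt_right hInt hmeas
      (hcontOn.continuousAt (hopen.mem_nhds hτ))
  -- τ-derivative
  have hden : HasDerivAt (fun t : ℝ => 4 * t + 2 * C) 4 τ := by
    simpa using ((hasDerivAt_id τ).const_mul 4).add_const (2 * C)
  have hfrac : HasDerivAt (fun t => -(z ^ 2) / (4 * t + 2 * C))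
      ((0 * (4 * τ + 2 * C) - (-(z ^ 2)) * 4) / (4 * τ + 2 * C) ^ 2) τ :=
    (hasDerivAt_const τ (-(z ^ 2))).div hden ha
  have hTau : HasDerivAt (fun t => f t z)
      (C₀ * (Real.exp (-(z ^ 2) / (4 * τ + 2 * C) + ∫ s in τ₀..τ, h s) *
        ((0 * (4 * τ + 2 * C) - (-(z ^ 2)) * 4) / (4 * τ + 2 * C) ^ 2 + h τ))) τ := by
    have hd := ((hfrac.add hI).exp).const_mul C₀
    exact hd.congr_of_eventuallyEq (Filter.Eventually.of_forall fun t => hf t z)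
  -- z-derivative helper
  have key : ∀ (K w : ℝ),
      HasDerivAt (fun y => C₀ * Real.exp (-(y ^ 2) / (4 * τ + 2 * C) + K))
        (C₀ * (Real.exp (-(w ^ 2) / (4 * τ + 2 * C) + K) * (-(2 * w) / (4 * τ + 2 * C)))) w := by
    intro K w
    have h1 : HasDerivAt (fun y : ℝ => -(y ^ 2) / (4 * τ + 2 * C) + K)
        (-(2 * w) / (4 * τ + 2 * C)) w := by
      simpa using (((hasDerivAt_pow 2 w).neg).div_const (4 * τ + 2 * C)).add_const K
    exact (h1.exp).const_mul C₀
  set K₀ : ℝ := ∫ s in τ₀..τ, h s with hK₀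
  have heqf : f τ = fun y => C₀ * Real.exp (-(y ^ 2) / (4 * τ + 2 * C) + K₀) :=
    funext fun y => hf τ y
  have hfz : deriv (f τ) = fun w =>
      C₀ * (Real.exp (-(w ^ 2) / (4 * τ + 2 * C) + K₀) * (-(2 * w) / (4 * τ + 2 * C))) := by
    funext w
    rw [heqf]
    exact (key K₀ w).deriv
  -- second z-derivative
  have hexp : HasDerivAt (fun w => Real.exp (-(w ^ 2) / (4 * τ + 2 * C) + K₀))
      (Real.exp (-(z ^ 2) / (4 * τ + 2 * C) + K₀) * (-(2 * z) / (4 * τ + 2 * C))) z := by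
    have h1 : HasDerivAt (fun y : ℝ => -(y ^ 2) / (4 * τ + 2 * C) + K₀)
        (-(2 * z) / (4 * τ + 2 * C)) z := by
      simpa using (((hasDerivAt_pow 2 z).neg).div_const (4 * τ + 2 * C)).add_const K₀
    exact h1.exp
  have hlin : HasDerivAt (fun w : ℝ => -(2 * w) / (4 * τ + 2 * C))
      (-2 / (4 * τ + 2 * C)) z := by
    simpa [neg_div] using (((hasDerivAt_id z).const_mul 2).neg).div_const (4 * τ + 2 * C)
  have key2 : HasDerivAt (fun w =>
      C₀ * (Real.exp (-(w ^ 2) / (4 * τ + 2 * C) + K₀) * (-(2 * w) / (4 * τ + 2 * C))))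
      (C₀ * ((Real.exp (-(z ^ 2) / (4 * τ + 2 * C) + K₀) * (-(2 * z) / (4 * τ + 2 * C))) *
        (-(2 * z) / (4 * τ + 2 * C)) +
        Real.exp (-(z ^ 2) / (4 * τ + 2 * C) + K₀) * (-2 / (4 * τ + 2 * C)))) z :=
    (hexp.mul hlin).const_mul C₀
  rw [hTau.deriv, hfz, key2.deriv]
  simp only [hh]
  have h4 : (4 * τ + 2 * C) = 2 * (2 * τ + C) := by ring
  rw [h4]
  field_simp
  ring
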